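/- arXiv:1108.3024 — 3 statements merged into one kernel-verified Lean document; each statement's English description precedes it below -/
import Mathlib

section
/- Let |q| < 1, x ∈ S(q), and t ∈ ℝ with (1-q)t² < 1. Then for every integer n ≥ 0, the series η_n(x|t,q) = Σ_{j≥0} (t^j/[j]_q!) H_{j+n}(x|q) converges and equals H_n(x|t,q) · φ_H(x|t,q), where H_n(x|t,q) is the big q-Hermite polynomial. -/
open Finset MeasureTheory

noncomputable section

/-- [n]_q = 1 + q + ... + q^{n-1} -/
def qNat (q : ℝ) (n : ℕ) : ℝ := ∑ j ∈ Finset.range n, q ^ j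

/-- [n]_q! -/
def qFact (q : ℝ) : ℕ → ℝ
  | 0 => 1
  | n + 1 => qFact q n * qNat q (n + 1)

/-- q-binomial coefficient -/
def qBinom (q : ℝ) (n k : ℕ) : ℝ :=
  if k ≤ n then qFact q n / (qFact q (n - k) * qFact q k) else 0

/-- q-Pochhammer symbol (a;q)_n -/
def qPoch (a q : ℝ) (n : ℕ) : ℝ := ∏ j ∈ Finset.range n, (1 - a * q ^ j)

/-- q-Pochhammer symbol (a;q)_∞ -/
def qPochInf (a q : ℝ) : ℝ := ∏' j : ℕ, (1 - a * q ^ j)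

/-- continuous q-Hermite polynomials H_n(x|q) -/
def qHermite (q : ℝ) : ℕ → ℝ → ℝ
  | 0, _ => 1
  | 1, x => x
  | n + 2, x => x * qHermite q (n + 1) x - qNat q (n + 1) * qHermite q n x

/-- big q-Hermite polynomials H_n(x|a,q) -/
def bigqHermite (q a : ℝ) : ℕ → ℝ → ℝ
  | 0, _ => 1
  | 1, x => x - a
  | n + 2, x => (x - a * q ^ (n + 1)) * bigqHermite q a (n + 1) x -
      qNat q (n + 1) * bigqHermite q a n x

/-- rescaled Al-Salam--Chihara polynomials P_n(x|y,ρ,q) -/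
def ascP (q y ρ : ℝ) : ℕ → ℝ → ℝ
  | 0, _ => 1
  | 1, x => x - ρ * y
  | n + 2, x => (x - ρ * y * q ^ (n + 1)) * ascP q y ρ (n + 1) x -
      qNat q (n + 1) * (1 - ρ ^ 2 * q ^ n) * ascP q y ρ n x

/-- generating function φ_H(x|t,q) of the q-Hermite polynomials -/
def phiH (q t x : ℝ) : ℝ := ∑' n : ℕ, t ^ n / qFact q n * qHermite q n x

/-- γ_{i,j}(x,y|ρ,q) -/
def gammaPM (q ρ : ℝ) (i j : ℕ) (x y : ℝ) : ℝ :=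
  ∑' n : ℕ, ρ ^ n / qFact q n * qHermite q (n + i) x * qHermite q (n + j) y

/-- the polynomials Q_{i,j}(x,y|ρ,q) -/
def Qpoly (q ρ : ℝ) (i j : ℕ) (x y : ℝ) : ℝ :=
  ∑ s ∈ Finset.range (j + 1),
    (-1 : ℝ) ^ s * q ^ (s * (s - 1) / 2) * qBinom q j s * ρ ^ s * qHermite q (j - s) y *
      ascP q y ρ (i + s) x / qPoch (ρ ^ 2) q (i + s)

/-- the interval S(q) = [-2/√(1-q), 2/√(1-q)] -/
def Sq (q : ℝ) : Set ℝ := Set.Icc (-(2 / Real.sqrt (1 - q))) (2 / Real.sqrt (1 - q))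

/-- ω(x,y|ρ) -/
def omegaPM (x y ρ : ℝ) : ℝ :=
  (1 - ρ ^ 2) ^ 2 - 4 * ρ * (1 + ρ ^ 2) * x * y + 4 * ρ ^ 2 * (x ^ 2 + y ^ 2)

/-- l(x|a) -/
def lPM (x a : ℝ) : ℝ := (1 + a) ^ 2 - 4 * a * x ^ 2

/-- the q-Normal density f_N(x|q) -/
def fN (q x : ℝ) : ℝ :=
  Real.sqrt ((1 - q) * (4 - (1 - q) * x ^ 2)) * qPochInf q q / (2 * Real.pi) *
    ∏' j : ℕ, lPM (x * Real.sqrt (1 - q) / 2) (q ^ (j + 1))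

/-- the (q,ρ)-Conditional Normal density f_CN(x|y,ρ,q) -/
def fCN (q ρ x y : ℝ) : ℝ :=
  fN q x * qPochInf (ρ ^ 2) q /
    ∏' j : ℕ, omegaPM (x * Real.sqrt (1 - q) / 2) (y * Real.sqrt (1 - q) / 2) (ρ * q ^ j)

/-- the (ρ,q)-bivariate Normal density f_{2D}(x,y|ρ,q) -/
def f2D (q ρ x y : ℝ) : ℝ := fCN q ρ x y * fN q y

namespace St0aux

/-- (q;q)_n -/
def QP (q : ℝ) (n : ℕ) : ℝ := ∏ j ∈ Finset.range n, (1 - q ^ (j+1))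

lemma QP_zero (q : ℝ) : QP q 0 = 1 := by simp [QP]

lemma QP_succ (q : ℝ) (n : ℕ) : QP q (n+1) = QP q n * (1 - q^(n+1)) :=
  Finset.prod_range_succ _ _

lemma pow_abs_lt_one {q : ℝ} (hq : |q| < 1) (n : ℕ) : |q| ^ (n+1) < 1 :=
  pow_lt_one₀ (abs_nonneg q) hq (Nat.succ_ne_zero n)

lemma one_sub_pow_pos {q : ℝ} (hq : |q| < 1) (n : ℕ) : 0 < 1 - q ^ (n+1) := by
  have h1 : q ^ (n+1) ≤ |q ^ (n+1)| := le_abs_self _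
  have h2 : |q ^ (n+1)| = |q| ^ (n+1) := abs_pow q (n+1)
  have := pow_abs_lt_one hq n
  nlinarith

lemma one_sub_abs_pow_pos {q : ℝ} (hq : |q| < 1) (n : ℕ) : 0 < 1 - |q| ^ (n+1) := by
  have := pow_abs_lt_one hq n; linarith

lemma QP_pos {q : ℝ} (hq : |q| < 1) (n : ℕ) : 0 < QP q n :=
  Finset.prod_pos (fun j _ => one_sub_pow_pos hq j)

lemma geom_tail_le {q : ℝ} (hq : |q| < 1) (n : ℕ) :
    ∑ j ∈ Finset.range n, |q| ^ (j+1) ≤ |q| / (1 - |q|) := by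
  have h1 : (0:ℝ) ≤ |q| := abs_nonneg q
  have h2 : ∑ j ∈ Finset.range n, |q| ^ (j+1) = |q| * ∑ j ∈ Finset.range n, |q| ^ j := by
    rw [Finset.mul_sum]; exact Finset.sum_congr rfl (fun j _ => by ring)
  rcases eq_or_lt_of_le h1 with h | h
  · simp [← h]
  · have h3 : ∑ j ∈ Finset.range n, |q| ^ j = (|q|^n - 1)/(|q| - 1) := geom_sum_eq (by linarith [hq]) n
    have h4 : (|q|^n - 1)/(|q| - 1) = (1 - |q|^n)/(1 - |q|) := by
      rw [div_eq_div_iff (by linarith) (by linarith)]; ring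
    have h5 : (0:ℝ) ≤ |q| ^ n := pow_nonneg h1 n
    have h6 : (0:ℝ) < 1 - |q| := by linarith
    rw [h2, h3, h4]
    have h7 : |q| * ((1 - |q|^n)/(1-|q|)) = (|q| * (1 - |q|^n))/(1-|q|) := by ring
    rw [h7, div_le_div_iff₀ h6 h6]
    nlinarith [mul_nonneg (mul_nonneg h1 h6.le) h5]

/-- upper bound for QP -/
lemma QP_le {q : ℝ} (hq : |q| < 1) (n : ℕ) : QP q n ≤ Real.exp (|q| / (1 - |q|)) := by
  have h1 : QP q n ≤ ∏ j ∈ Finset.range n, Real.exp (|q|^(j+1)) := by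
    apply Finset.prod_le_prod (fun j _ => le_of_lt (one_sub_pow_pos hq j))
    intro j _
    have h2 : q ^ (j+1) ≥ -(|q|^(j+1)) := by
      have := neg_abs_le (q ^ (j+1)); rw [abs_pow] at this; linarith
    have := Real.add_one_le_exp (|q|^(j+1))
    linarith
  rw [← Real.exp_sum] at h1
  exact h1.trans (Real.exp_le_exp.mpr (geom_tail_le hq n))

/-- lower bound per factor: exp(-a/(1-r)) ≤ 1 - a for 0 ≤ a ≤ r < 1 -/
lemma exp_le_one_sub {a r : ℝ} (ha : 0 ≤ a) (har : a ≤ r) (hr : r < 1) :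
    Real.exp (-(a/(1-r))) ≤ 1 - a := by
  have h1 : Real.exp (a/(1-r)) ≥ 1 + a/(1-r) := by
    have := Real.add_one_le_exp (a/(1-r)); linarith
  have h2 : (0:ℝ) < 1 - r := by linarith
  have h3 : (1 - a) * Real.exp (a/(1-r)) ≥ (1-a) * (1 + a/(1-r)) := by
    apply mul_le_mul_of_nonneg_left h1 (by linarith)
  have h4 : (1-a) * (1 + a/(1-r)) ≥ 1 := by
    have : (1-a)*(1 + a/(1-r)) - 1 = a * ((1-a)/(1-r) - 1) := by field_simp; ring
    have h5 : (1-a)/(1-r) ≥ 1 := (le_div_iff₀ h2).mpr (by linarith)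
    nlinarith
  have h6 : Real.exp (-(a/(1-r))) = 1 / Real.exp (a/(1-r)) := by
    rw [Real.exp_neg]; ring
  rw [h6, div_le_iff₀ (Real.exp_pos _)]
  nlinarith [Real.exp_pos (a/(1-r))]

lemma QP_ge {q : ℝ} (hq : |q| < 1) (n : ℕ) :
    Real.exp (-(|q| / (1 - |q|)^2)) ≤ QP q n := by
  have h1 : ∏ j ∈ Finset.range n, Real.exp (-(|q|^(j+1)/(1-|q|))) ≤ QP q n := by
    apply Finset.prod_le_prod (fun j _ => le_of_lt (Real.exp_pos _))
    intro j _
    have h2 : 1 - |q|^(j+1) ≤ 1 - q^(j+1) := by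
      have := le_abs_self (q ^ (j+1)); rw [abs_pow] at this; linarith
    have h3 : Real.exp (-(|q|^(j+1)/(1-|q|))) ≤ 1 - |q|^(j+1) :=
      exp_le_one_sub (pow_nonneg (abs_nonneg q) _) (pow_le_of_le_one (abs_nonneg q) hq.le (Nat.succ_ne_zero j)) hq
    linarith
  rw [← Real.exp_sum] at h1
  refine le_trans (Real.exp_le_exp.mpr ?_) h1
  have h5 : (0:ℝ) < 1 - |q| := by cases abs_lt.mp hq <;> linarith
  have h4 : ∑ j ∈ Finset.range n, -(|q|^(j+1)/(1-|q|)) =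
      -((∑ j ∈ Finset.range n, |q|^(j+1))/(1-|q|)) := by
    simp only [neg_div, Finset.sum_div, Finset.sum_neg_distrib]
  rw [h4, neg_le_neg_iff]
  have h6 := geom_tail_le hq n
  have h7 : (∑ j ∈ Finset.range n, |q|^(j+1)) * (1-|q|) ≤ |q| := (le_div_iff₀ h5).mp h6
  rw [div_le_div_iff₀ h5 (pow_pos h5 2)]
  nlinarith [h7, h5]

lemma qNat_eq {q : ℝ} (hq : |q| < 1) (n : ℕ) : qNat q n = (1 - q^n)/(1-q) := by
  have hq1 : q ≠ 1 := by intro h; rw [h] at hq; simp at hq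
  rw [qNat, geom_sum_eq hq1 n, div_eq_div_iff (sub_ne_zero.mpr hq1) (by intro h; apply sub_ne_zero.mpr hq1; linarith [sub_eq_zero.mp h])]
  ring

lemma qNat_pos {q : ℝ} (hq : |q| < 1) (n : ℕ) : 0 < qNat q (n+1) := by
  rw [qNat_eq hq]
  have h1 : 0 < 1 - q^(n+1) := one_sub_pow_pos hq n
  have h2 : (0:ℝ) < 1 - q := by cases abs_lt.mp hq; linarith
  positivity

lemma qFact_eq {q : ℝ} (hq : |q| < 1) (n : ℕ) : qFact q n = QP q n / (1-q)^n := by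
  induction n with
  | zero => simp [qFact, QP_zero]
  | succ m ih =>
    have h2 : (0:ℝ) < 1 - q := by cases abs_lt.mp hq; linarith
    rw [qFact, ih, qNat_eq hq, QP_succ, pow_succ, div_mul_div_comm, ← pow_succ (1-q) m]

lemma qFact_pos {q : ℝ} (hq : |q| < 1) (n : ℕ) : 0 < qFact q n := by
  rw [qFact_eq hq]
  have h2 : (0:ℝ) < 1 - q := by cases abs_lt.mp hq; linarith
  have := QP_pos hq n
  positivity

/-- q-binomial via (q;q) products -/
def Bq (q : ℝ) (n k : ℕ) : ℝ :=
  if k ≤ n then QP q n / (QP q k * QP q (n-k)) else 0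

lemma Bq_zero {q : ℝ} (hq : |q| < 1) (n : ℕ) : Bq q n 0 = 1 := by
  rw [Bq, if_pos (Nat.zero_le n)]
  simp [QP_zero, div_self (QP_pos hq n).ne']

lemma Bq_self {q : ℝ} (hq : |q| < 1) (n : ℕ) : Bq q n n = 1 := by
  rw [Bq, if_pos le_rfl]
  simp [QP_zero, div_self (QP_pos hq n).ne']

lemma Bq_of_gt (q : ℝ) {n k : ℕ} (h : n < k) : Bq q n k = 0 := by
  rw [Bq, if_neg (by omega)]

lemma Bq_nonneg {q : ℝ} (hq : |q| < 1) (n k : ℕ) : 0 ≤ Bq q n k := by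
  rw [Bq]
  split
  · have h1 := QP_pos hq n
    have h2 := QP_pos hq k
    have h3 := QP_pos hq (n-k)
    positivity
  · exact le_refl 0

lemma Bq_le {q : ℝ} (hq : |q| < 1) (n k : ℕ) :
    Bq q n k ≤ Real.exp (|q|/(1-|q|) + 2*(|q|/(1-|q|)^2)) := by
  rw [Bq]
  have hP := QP_le hq n
  have hD1 := QP_ge hq k
  have hD2 := QP_ge hq (n-k)
  have hpos1 := QP_pos hq k
  have hpos2 := QP_pos hq (n-k)
  have hE : Real.exp (|q|/(1-|q|) + 2*(|q|/(1-|q|)^2)) =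
      Real.exp (|q|/(1-|q|)) / (Real.exp (-(|q|/(1-|q|)^2)) * Real.exp (-(|q|/(1-|q|)^2))) := by
    rw [← Real.exp_add, ← Real.exp_sub]; ring_nf
  split
  · rw [hE]
    exact div_le_div₀ (Real.exp_pos _).le hP (by positivity)
      (mul_le_mul hD1 hD2 (Real.exp_pos _).le hpos1.le)
  · exact le_of_lt (Real.exp_pos _)

lemma Bq_key {q : ℝ} (hq : |q| < 1) (n j : ℕ) :
    Bq q (n+2) (j+1) = Bq q (n+1) (j+1) + Bq q (n+1) j - (1-q^(n+1)) * Bq q n j := by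
  rcases lt_or_ge n j with h | h
  · -- j ≥ n+1: cases j = n+1 and j > n+1
    rcases eq_or_lt_of_le (Nat.succ_le_of_lt h) with h2 | h2
    · -- j = n+1
      subst h2
      rw [Bq_self hq, Bq_self hq, Bq_of_gt q (by omega), Bq_of_gt q (by omega)]
      ring
    · rw [Bq_of_gt q (by omega), Bq_of_gt q (by omega), Bq_of_gt q (by omega),
        Bq_of_gt q (by omega)]
      ring
  · -- main case j ≤ n, write n = j + m
    obtain ⟨m, rfl⟩ : ∃ m, n = j + m := ⟨n - j, by omega⟩
    have e1 : j + m + 2 - (j+1) = m + 1 := by omega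
    have e2 : j + m + 1 - (j+1) = m := by omega
    have e3 : j + m + 1 - j = m + 1 := by omega
    have e4 : j + m - j = m := by omega
    rw [Bq, Bq, Bq, Bq, if_pos (by omega), if_pos (by omega), if_pos (by omega),
      if_pos (by omega), e1, e2, e3, e4]
    have hj := (QP_pos hq j).ne'
    have hj1 := (QP_pos hq (j+1)).ne'
    have hm := (QP_pos hq m).ne'
    have hm1 := (QP_pos hq (m+1)).ne'
    have f1 : QP q (j+1) = QP q j * (1 - q^(j+1)) := QP_succ q j
    have f2 : QP q (m+1) = QP q m * (1 - q^(m+1)) := QP_succ q m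
    have f3 : QP q (j+m+1) = QP q (j+m) * (1 - q^(j+m+1)) := QP_succ q (j+m)
    have f4 : QP q (j+m+2) = QP q (j+m) * (1 - q^(j+m+1)) * (1 - q^(j+m+2)) := by
      rw [QP_succ q (j+m+1), QP_succ q (j+m)]
    have g1 := (one_sub_pow_pos hq j).ne'
    have g2 := (one_sub_pow_pos hq m).ne'
    rw [f1, f2, f3, f4]
    field_simp
    ring

lemma hermite_formula {q x s : ℝ} (hq : |q| < 1) (hs : s^2 = 1 - q) {z v : ℂ}
    (hzv : z * v = 1) (hx : (x:ℂ) * (s:ℂ) = z + v) (n : ℕ) :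
    (qHermite q n x : ℂ) * (s:ℂ)^n
      = ∑ k ∈ Finset.range (n+1), (Bq q n k : ℂ) * z^(n-k) * v^k := by
  have hq1 : (1:ℝ) - q ≠ 0 := by
    intro h; rw [abs_lt] at hq; linarith
  have key : ∀ m : ℕ,
      ((qHermite q m x : ℂ) * (s:ℂ)^m
        = ∑ k ∈ Finset.range (m+1), (Bq q m k : ℂ) * z^(m-k) * v^k)
      ∧ ((qHermite q (m+1) x : ℂ) * (s:ℂ)^(m+1)
        = ∑ k ∈ Finset.range (m+2), (Bq q (m+1) k : ℂ) * z^(m+1-k) * v^k) := by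
    intro m
    induction m with
    | zero =>
      constructor
      · simp [qHermite, Bq_zero hq]
      · rw [show qHermite q 1 x = x from rfl]
        rw [Finset.sum_range_succ, Finset.sum_range_one]
        rw [Bq_zero hq, Bq_self hq]
        push_cast
        simp only [pow_one, pow_zero, Nat.sub_self, Nat.sub_zero]
        linear_combination hx
    | succ m ih =>
      refine ⟨ih.2, ?_⟩
      show (qHermite q (m+2) x : ℂ) * (s:ℂ)^(m+2)
        = ∑ k ∈ Finset.range (m+3), (Bq q (m+2) k : ℂ) * z^(m+2-k) * v^k
      have hC : ((qNat q (m+1) : ℝ):ℂ) * (s:ℂ)^2 = 1 - (q:ℂ)^(m+1) := by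
        have hr : qNat q (m+1) * s^2 = 1 - q^(m+1) := by
          rw [qNat_eq hq, hs]; field_simp
        have := congrArg (fun r : ℝ => (r:ℂ)) hr
        push_cast at this
        exact_mod_cast this
      have step1 : (qHermite q (m+2) x : ℂ) * (s:ℂ)^(m+2)
          = (z+v) * ((qHermite q (m+1) x : ℂ) * (s:ℂ)^(m+1))
            - (1 - (q:ℂ)^(m+1)) * ((qHermite q m x : ℂ) * (s:ℂ)^m) := by
        rw [show qHermite q (m+2) x
            = x * qHermite q (m+1) x - qNat q (m+1) * qHermite q m x from rfl]
        push_cast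
        linear_combination ((qHermite q (m+1) x : ℂ) * (s:ℂ)^(m+1)) * hx
          + (-((qHermite q m x : ℂ) * (s:ℂ)^m)) * hC
      rw [step1, ih.2, ih.1]
      rw [Finset.sum_range_succ' (fun k => (Bq q (m+2) k : ℂ) * z^(m+2-k) * v^k) (m+2)]
      have hf0 : (Bq q (m+2) 0 : ℂ) * z^(m+2-0) * v^0 = z^(m+2) := by
        rw [Bq_zero hq]; push_cast; ring
      rw [hf0]
      have hA : z * (∑ k ∈ Finset.range (m+2), (Bq q (m+1) k : ℂ) * z^(m+1-k) * v^k)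
          = z^(m+2) + ∑ k ∈ Finset.range (m+2),
              (Bq q (m+1) (k+1) : ℂ) * z^(m+1-(k+1)) * v^(k+1) * z := by
        rw [Finset.mul_sum,
          Finset.sum_range_succ' (fun k => z * ((Bq q (m+1) k:ℂ) * z^(m+1-k) * v^k)) (m+1)]
        rw [add_comm]
        congr 1
        · rw [Bq_zero hq]; push_cast
          simp only [Nat.sub_zero, pow_zero]
          ring
        · conv_rhs => rw [Finset.sum_range_succ]
          rw [Bq_of_gt q (show m+1 < m+1+1 by omega)]
          push_cast
          rw [zero_mul, zero_mul, zero_mul, add_zero]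
          exact Finset.sum_congr rfl (fun k _ => by ring)
      have hB : v * (∑ k ∈ Finset.range (m+2), (Bq q (m+1) k : ℂ) * z^(m+1-k) * v^k)
          = ∑ k ∈ Finset.range (m+2), (Bq q (m+1) k : ℂ) * z^(m+1-k) * v^k * v := by
        rw [Finset.mul_sum]
        exact Finset.sum_congr rfl (fun k _ => by ring)
      have hCs : (1 - (q:ℂ)^(m+1)) * (∑ k ∈ Finset.range (m+1), (Bq q m k : ℂ) * z^(m-k) * v^k)
          = ∑ k ∈ Finset.range (m+2), (1 - (q:ℂ)^(m+1)) * ((Bq q m k : ℂ) * z^(m-k) * v^k) := by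
        conv_rhs => rw [Finset.sum_range_succ]
        rw [Bq_of_gt q (show m < m+1 by omega), Finset.mul_sum]
        push_cast
        rw [zero_mul, zero_mul, mul_zero, add_zero]
      rw [add_mul, hA, hB, hCs]
      have hmain : ∀ k ∈ Finset.range (m+2),
          (Bq q (m+2) (k+1) : ℂ) * z^(m+2-(k+1)) * v^(k+1)
          = (Bq q (m+1) (k+1):ℂ) * z^(m+1-(k+1)) * v^(k+1) * z
            + (Bq q (m+1) k : ℂ) * z^(m+1-k) * v^k * v
            - (1-(q:ℂ)^(m+1)) * ((Bq q m k : ℂ) * z^(m-k) * v^k) := by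
        intro k hk
        have hk2 : k ≤ m + 1 := by
          have := Finset.mem_range.mp hk; omega
        rcases Nat.lt_or_ge k (m+1) with hkm | hkm
        · have hkm' : k ≤ m := by omega
          have ek1 : m+2-(k+1) = (m-k)+1 := by omega
          have ek2 : m+1-(k+1) = m-k := by omega
          have ek3 : m+1-k = (m-k)+1 := by omega
          rw [ek1, ek2, ek3]
          have hkC : (Bq q (m+2) (k+1) : ℂ)
              = (Bq q (m+1) (k+1):ℂ) + (Bq q (m+1) k:ℂ)
                - (1-(q:ℂ)^(m+1)) * (Bq q m k:ℂ) := by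
            have hk' := Bq_key hq m k
            have := congrArg (fun r : ℝ => (r:ℂ)) hk'
            push_cast at this
            exact_mod_cast this
          rw [hkC]
          linear_combination (-(1-(q:ℂ)^(m+1)) * (Bq q m k:ℂ) * z^(m-k) * v^k) * hzv
        · have hkm' : k = m + 1 := by omega
          subst hkm'
          rw [show m+1+1 = m+2 from rfl, Bq_self hq (m+2), Bq_self hq (m+1),
            Bq_of_gt q (show m+1 < m+2 by omega), Bq_of_gt q (show m < m+1 by omega)]
          push_cast
          ring
      calc z^(m+2) + (∑ k ∈ Finset.range (m+2),
              (Bq q (m+1) (k+1) : ℂ) * z^(m+1-(k+1)) * v^(k+1) * z)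
            + (∑ k ∈ Finset.range (m+2), (Bq q (m+1) k : ℂ) * z^(m+1-k) * v^k * v)
            - (∑ k ∈ Finset.range (m+2), (1 - (q:ℂ)^(m+1)) * ((Bq q m k : ℂ) * z^(m-k) * v^k))
          = (∑ k ∈ Finset.range (m+2),
              ((Bq q (m+1) (k+1) : ℂ) * z^(m+1-(k+1)) * v^(k+1) * z
                + (Bq q (m+1) k : ℂ) * z^(m+1-k) * v^k * v
                - (1 - (q:ℂ)^(m+1)) * ((Bq q m k : ℂ) * z^(m-k) * v^k))) + z^(m+2) := by
            rw [Finset.sum_sub_distrib, Finset.sum_add_distrib]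
            ring
        _ = (∑ k ∈ Finset.range (m+2), (Bq q (m+2) (k+1) : ℂ) * z^(m+2-(k+1)) * v^(k+1))
              + z^(m+2) := by
            rw [Finset.sum_congr rfl hmain]
  exact (key n).1

lemma qHermite_bound {q x : ℝ} (hq : |q| < 1) (hx : x ∈ Sq q) (n : ℕ) :
    |qHermite q n x| * (Real.sqrt (1-q))^n
      ≤ (n+1) * Real.exp (|q|/(1-|q|) + 2*(|q|/(1-|q|)^2)) := by
  have hq2 : (0:ℝ) < 1 - q := by
    rcases abs_lt.mp hq with ⟨h1, h2⟩; linarith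
  set s := Real.sqrt (1-q) with hsdef
  have hs0 : 0 < s := Real.sqrt_pos.mpr hq2
  have hs : s^2 = 1-q := Real.sq_sqrt hq2.le
  have hxs : x * s ≤ 2 := by
    have := mul_le_mul_of_nonneg_right hx.2 hs0.le
    rwa [div_mul_cancel₀ 2 hs0.ne'] at this
  have hxs' : -2 ≤ x * s := by
    have := mul_le_mul_of_nonneg_right hx.1 hs0.le
    rw [neg_mul, div_mul_cancel₀ 2 hs0.ne'] at this
    linarith
  set θ := Real.arccos (x*s/2) with hθ
  set z : ℂ := Complex.exp (θ * Complex.I) with hz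
  have habs : ‖z‖ = 1 := Complex.norm_exp_ofReal_mul_I θ
  have hzv : z * (starRingEnd ℂ) z = 1 := by
    rw [Complex.mul_conj, Complex.normSq_eq_norm_sq, habs]
    norm_num
  have hre : z.re = x*s/2 := by
    rw [hz, Complex.exp_ofReal_mul_I_re, hθ]
    exact Real.cos_arccos (by linarith) (by linarith)
  have hxz : (x:ℂ) * (s:ℂ) = z + (starRingEnd ℂ) z := by
    rw [Complex.add_conj, hre]
    push_cast
    ring
  have hform := hermite_formula hq hs hzv hxz n
  have hznorm : ‖z‖ = 1 := by exact habs
  calc |qHermite q n x| * s^n = ‖(qHermite q n x : ℂ) * (s:ℂ)^n‖ := by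
        rw [norm_mul, Complex.norm_real, norm_pow, Complex.norm_real, Real.norm_eq_abs,
          Real.norm_eq_abs, abs_of_nonneg hs0.le]
    _ = ‖∑ k ∈ Finset.range (n+1), (Bq q n k : ℂ) * z^(n-k) * ((starRingEnd ℂ) z)^k‖ := by
        rw [hform]
    _ ≤ ∑ k ∈ Finset.range (n+1), ‖(Bq q n k : ℂ) * z^(n-k) * ((starRingEnd ℂ) z)^k‖ :=
        norm_sum_le _ _
    _ ≤ ∑ _k ∈ Finset.range (n+1), Real.exp (|q|/(1-|q|) + 2*(|q|/(1-|q|)^2)) := by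
        apply Finset.sum_le_sum
        intro k _
        have h2 : ‖(starRingEnd ℂ) z‖ = 1 := by
          rw [RCLike.norm_conj]; exact hznorm
        rw [norm_mul, norm_mul, norm_pow, norm_pow, hznorm, h2, one_pow, one_pow,
          mul_one, mul_one, Complex.norm_real, Real.norm_eq_abs,
          abs_of_nonneg (Bq_nonneg hq n k)]
        exact Bq_le hq n k
    _ = (n+1) * Real.exp (|q|/(1-|q|) + 2*(|q|/(1-|q|)^2)) := by
        rw [Finset.sum_const, Finset.card_range, nsmul_eq_mul]
        push_cast
        ring

lemma eta_summable {q x t : ℝ} (hq : |q| < 1) (hx : x ∈ Sq q) (ht : (1 - q) * t ^ 2 < 1)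
    (m : ℕ) : Summable (fun j : ℕ => t ^ j / qFact q j * qHermite q (j + m) x) := by
  have hq2 : (0:ℝ) < 1 - q := by
    rcases abs_lt.mp hq with ⟨h1, h2⟩; linarith
  set s := Real.sqrt (1-q) with hsdef
  have hs0 : 0 < s := Real.sqrt_pos.mpr hq2
  have hs : s^2 = 1-q := Real.sq_sqrt hq2.le
  set Cq := Real.exp (|q|/(1-|q|) + 2*(|q|/(1-|q|)^2)) with hCq
  have hCq0 : 0 < Cq := Real.exp_pos _
  set D := Real.exp (-(|q| / (1 - |q|)^2)) with hD
  have hD0 : 0 < D := Real.exp_pos _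
  set r := |t| * s with hr
  have hr0 : 0 ≤ r := mul_nonneg (abs_nonneg t) hs0.le
  have hr1 : r < 1 := by
    have h1 : r^2 = (1-q) * t^2 := by
      rw [hr, mul_pow, sq_abs, hs]
      ring
    nlinarith
  set K := Cq / (D * s^m) with hK
  have hK0 : 0 < K := by positivity
  -- majorant summable
  have hmaj : Summable (fun j : ℕ => K * (((j:ℝ) + m + 1) * r^j)) := by
    have h1 : Summable (fun j : ℕ => (j:ℝ) * r^j) := by
      have := summable_pow_mul_geometric_of_norm_lt_one (R := ℝ) 1
        (r := r) (by rwa [Real.norm_eq_abs, abs_of_nonneg hr0])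
      simpa using this
    have h2 : Summable (fun j : ℕ => r^j) := summable_geometric_of_lt_one hr0 hr1
    have h3 : Summable (fun j : ℕ => K * ((j:ℝ) * r^j) + (K * (m+1)) * r^j) :=
      (h1.mul_left K).add (h2.mul_left (K * (m+1)))
    apply h3.congr
    intro j
    ring
  apply Summable.of_norm_bounded hmaj
  intro j
  have hFpos := qFact_pos hq j
  have hHb := qHermite_bound hq hx (j + m)
  rw [Real.norm_eq_abs, abs_mul, abs_div, abs_pow, abs_of_pos hFpos]
  -- |t|^j / qFact q j * |H_{j+m}| ≤ K * ((j+m+1) * r^j)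
  have hfq : D / (1-q)^j ≤ qFact q j := by
    rw [qFact_eq hq]
    exact (div_le_div_iff_of_pos_right (pow_pos hq2 j)).mpr (QP_ge hq j)
  have hfq2 : (qFact q j)⁻¹ ≤ (1-q)^j / D := by
    have h5 : 0 < D / (1-q)^j := by positivity
    have h6 := one_div_le_one_div_of_le h5 hfq
    rw [one_div_div] at h6
    rw [inv_eq_one_div]
    exact h6
  calc |t|^j / qFact q j * |qHermite q (j+m) x|
      ≤ (|t|^j * ((1-q)^j / D)) * (((j:ℝ)+m+1) * Cq / s^(j+m)) := by
        apply mul_le_mul ?_ ?_ (abs_nonneg _) (by positivity)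
        · rw [div_eq_mul_inv]
          exact mul_le_mul_of_nonneg_left hfq2 (pow_nonneg (abs_nonneg t) j)
        · rw [le_div_iff₀ (pow_pos hs0 _)]
          have := qHermite_bound hq hx (j + m)
          push_cast at this ⊢
          convert this using 2 <;> push_cast <;> ring
    _ = K * (((j:ℝ)+m+1) * r^j) := by
        have h6 : (1-q)^j = s^j * s^j := by
          rw [← hs, ← pow_mul, two_mul, pow_add]
        have h7 : s^(j+m) = s^j * s^m := pow_add s j m
        rw [hK, hr, h6, h7, mul_pow]
        have hsj := pow_pos hs0 j
        have hsm := pow_pos hs0 m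
        field_simp

lemma qNat_add (q : ℝ) (a b : ℕ) : qNat q (a+b) = qNat q a + q^a * qNat q b := by
  rw [qNat, qNat, qNat, Finset.sum_range_add, Finset.mul_sum]
  congr 1
  exact Finset.sum_congr rfl (fun i _ => pow_add q a i)

lemma shift_hasSum {q x t S : ℝ} (hq : |q| < 1) {m : ℕ}
    (hm : HasSum (fun j : ℕ => t^j / qFact q j * qHermite q (j+m) x) S) :
    HasSum (fun j : ℕ => t^j * qNat q j / qFact q j * qHermite q (j-1+m) x) (t*S) := by
  have h1 := hm.mul_left t
  have h2 : (fun j : ℕ => t^(j+1) * qNat q (j+1) / qFact q (j+1) * qHermite q ((j+1)-1+m) x)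
      = fun j : ℕ => t * (t^j / qFact q j * qHermite q (j+m) x) := by
    funext j
    have hF : qFact q (j+1) = qFact q j * qNat q (j+1) := rfl
    have hN := (qNat_pos hq j).ne'
    have hQ := (qFact_pos hq j).ne'
    rw [show (j+1)-1+m = j+m from by omega, hF]
    field_simp
    ring
  have h3 : HasSum
      (fun j : ℕ => (fun i : ℕ => t^i * qNat q i / qFact q i * qHermite q (i-1+m) x) (j+1))
      (t*S) := by
    simpa only [h2] using h1
  have h4 := (hasSum_nat_add_iff
    (f := fun j : ℕ => t^j * qNat q j / qFact q j * qHermite q (j-1+m) x) 1).mp h3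
  simpa [qNat] using h4

end St0aux

open St0aux

/-- for |q|<1, x ∈ S(q), (1-q)t² < 1, the series
η_n(x|t,q) = Σ_{j≥0} (t^j/[j]_q!) H_{j+n}(x|q) converges to H_n(x|t,q)·φ_H(x|t,q). -/
theorem statement0 (q x t : ℝ) (hq : |q| < 1) (hx : x ∈ Sq q) (ht : (1 - q) * t ^ 2 < 1)
    (n : ℕ) :
    HasSum (fun j : ℕ => t ^ j / qFact q j * qHermite q (j + n) x)
      (bigqHermite q t n x * phiH q t x) := by
  have hsum := eta_summable hq hx ht
  set φ := phiH q t x with hφ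
  have h0 : HasSum (fun j : ℕ => t ^ j / qFact q j * qHermite q (j + 0) x) φ := by
    have h := (hsum 0).hasSum
    have he : φ = ∑' (j : ℕ), t ^ j / qFact q j * qHermite q (j + 0) x := by
      rw [hφ, phiH]
      exact tsum_congr (fun j => by rw [Nat.add_zero])
    rwa [← he] at h
  have key : ∀ m : ℕ,
      HasSum (fun j : ℕ => t ^ j / qFact q j * qHermite q (j + m) x)
        (bigqHermite q t m x * φ)
      ∧ HasSum (fun j : ℕ => t ^ j / qFact q j * qHermite q (j + (m+1)) x)
        (bigqHermite q t (m+1) x * φ) := by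
    intro m
    induction m with
    | zero =>
      constructor
      · rw [show bigqHermite q t 0 x = 1 from rfl, one_mul]
        exact h0
      · have hG := shift_hasSum hq (m := 0) h0
        have hx1 := h0.mul_left x
        have hcomb := hx1.sub hG
        have hfun : (fun j : ℕ => t ^ j / qFact q j * qHermite q (j + (0+1)) x)
            = fun j : ℕ => x * (t^j / qFact q j * qHermite q (j+0) x)
              - t^j * qNat q j / qFact q j * qHermite q (j-1+0) x := by
          funext j
          cases j with
          | zero =>
            simp [qHermite, qFact, qNat]
          | succ i =>
            rw [show i+1+(0+1) = i+2 from by omega, show i+1-1+0 = i from by omega,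
              show i+1+0 = i+1 from by omega]
            rw [show qHermite q (i+2) x
              = x * qHermite q (i+1) x - qNat q (i+1) * qHermite q i x from rfl]
            ring
        rw [hfun, show bigqHermite q t (0+1) x = x - t from rfl, sub_mul]
        exact hcomb
    | succ m ih =>
      refine ⟨ih.2, ?_⟩
      have hG := shift_hasSum hq (m := m+1) ih.2
      have ha := ih.2.mul_left x
      have hb := ih.1.mul_left (qNat q (m+1))
      have hc := hG.mul_left (q^(m+1))
      have hcomb := (ha.sub hb).sub hc
      have hfun : (fun j : ℕ => t ^ j / qFact q j * qHermite q (j + (m+1+1)) x)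
          = fun j : ℕ => x * (t^j / qFact q j * qHermite q (j+(m+1)) x)
            - qNat q (m+1) * (t^j / qFact q j * qHermite q (j+m) x)
            - q^(m+1) * (t^j * qNat q j / qFact q j * qHermite q (j-1+(m+1)) x) := by
        funext j
        cases j with
        | zero =>
          rw [show (0:ℕ)+(m+1+1) = m+2 from by omega, show (0:ℕ)+(m+1) = m+1 from by omega,
            show (0:ℕ)+m = m from by omega]
          rw [show qHermite q (m+2) x
            = x * qHermite q (m+1) x - qNat q (m+1) * qHermite q m x from rfl]
          simp [qNat]
          ring
        | succ i =>
          rw [show i+1+(m+1+1) = (i+m+1)+2 from by omega,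
            show i+1-1+(m+1) = i+m+1 from by omega,
            show i+1+(m+1) = (i+m+1)+1 from by omega,
            show i+1+m = i+m+1 from by omega]
          rw [show qHermite q ((i+m+1)+2) x
            = x * qHermite q (i+m+2) x - qNat q (i+m+2) * qHermite q (i+m+1) x from rfl]
          rw [show qNat q (i+m+2) = qNat q (m+1+(i+1)) from by rw [show m+1+(i+1) = i+m+2 from by omega],
            qNat_add q (m+1) (i+1)]
          rw [show (i+m+1)+1 = i+m+2 from by omega]
          ring
      rw [hfun]
      have hval : bigqHermite q t (m+1+1) x * φ
          = x * (bigqHermite q t (m+1) x * φ)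
            - qNat q (m+1) * (bigqHermite q t m x * φ)
            - q^(m+1) * (t * (bigqHermite q t (m+1) x * φ)) := by
        rw [show bigqHermite q t (m+1+1) x
          = (x - t * q^(m+1)) * bigqHermite q t (m+1) x
            - qNat q (m+1) * bigqHermite q t m x from rfl]
        ring
      rw [hval]
      exact hcomb
  exact (key n).1
end
end

section
/- Let -1 < q ≤ 1, ρ ∈ ℝ with |ρ| < 1, and let (ξ_m)_{m≥0} be a real sequence such that for every n ≥ 0 and every ρ' with |ρ'| ≤ |ρ| the series σ_n(ρ'|q) = Σ_{j≥0} (ρ'^j/[j]_q!) ξ_{n+j} converges absolutely. Then for all integers m, n ≥ 0: σ_n(ρ q^m|q) = Σ_{k=0}^{m} (-1)^k [m choose k]_q q^{k(k-1)/2} (1-q)^k ρ^k σ_{n+k}(ρ|q). -/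
open Finset MeasureTheory

noncomputable section

variable {q : ℝ}

lemma qNat_succ_pos (hq1 : -1 < q) (hq2 : q ≤ 1) (n : ℕ) : 0 < qNat q (n + 1) := by
  rcases eq_or_lt_of_le hq2 with h | h
  · subst h; simp [qNat]; positivity
  · have hne : q ≠ 1 := ne_of_lt h
    rw [qNat, geom_sum_eq hne]
    have habs : |q| < 1 := abs_lt.2 ⟨hq1, h⟩
    have h1 : |q| ^ (n+1) < 1 := pow_lt_one₀ (abs_nonneg q) habs (Nat.succ_ne_zero n)
    have h2 : q ^ (n+1) ≤ |q| ^ (n+1) := by rw [← abs_pow]; exact le_abs_self _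
    apply div_pos_of_neg_of_neg <;> linarith

lemma qFact_pos (hq1 : -1 < q) (hq2 : q ≤ 1) : ∀ n, 0 < qFact q n
  | 0 => one_pos
  | n + 1 => mul_pos (qFact_pos hq1 hq2 n) (qNat_succ_pos hq1 hq2 n)

lemma one_sub_mul_qNat (n : ℕ) : (1 - q) * qNat q n = 1 - q ^ n := by
  have h := geom_sum_mul q n
  rw [qNat]; linear_combination -h

lemma qNat_add_decomp (a b : ℕ) : qNat q (a + b) = qNat q a + q ^ a * qNat q b := by
  rw [qNat, Finset.sum_range_add, qNat, qNat, Finset.mul_sum]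
  simp [pow_add]

lemma qBinom_zero (hq1 : -1 < q) (hq2 : q ≤ 1) (n : ℕ) : qBinom q n 0 = 1 := by
  rw [qBinom, if_pos (Nat.zero_le n)]
  simp [qFact]
  exact (qFact_pos hq1 hq2 n).ne'

lemma qBinom_pascal (hq1 : -1 < q) (hq2 : q ≤ 1) {j m : ℕ} (h : j ≤ m) :
    qBinom q (m+1) (j+1) = q^(j+1) * qBinom q m (j+1) + qBinom q m j := by
  rcases eq_or_lt_of_le h with rfl | h'
  · rw [qBinom, if_pos le_rfl, qBinom, if_neg (by omega), qBinom, if_pos le_rfl]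
    simp [qFact]
    rw [div_self (mul_pos (qFact_pos hq1 hq2 j) (qNat_succ_pos hq1 hq2 j)).ne',
      div_self (qFact_pos hq1 hq2 j).ne']
  · obtain ⟨r, rfl⟩ : ∃ r, m = j + 1 + r := ⟨m - (j+1), by omega⟩
    have e1 : j+1+r+1 - (j+1) = r+1 := by omega
    have e2 : j+1+r - (j+1) = r := by omega
    have e3 : j+1+r - j = r+1 := by omega
    rw [qBinom, if_pos (by omega), qBinom, if_pos (by omega), qBinom, if_pos (by omega),
      e1, e2, e3]
    have hF : qFact q (j+1+r+1) = qFact q (j+1+r) * qNat q (j+1+r+1) := rfl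
    have hN : qNat q (j+1+r+1) = qNat q (j+1) + q^(j+1) * qNat q (r+1) :=
      qNat_add_decomp (j+1) (r+1)
    have hFr : qFact q (r+1) = qFact q r * qNat q (r+1) := rfl
    have hFj : qFact q (j+1) = qFact q j * qNat q (j+1) := rfl
    rw [hF, hN, hFr, hFj]
    have n1 := (qFact_pos hq1 hq2 r).ne'
    have n2 := (qNat_succ_pos hq1 hq2 r).ne'
    have n3 := (qFact_pos hq1 hq2 j).ne'
    have n4 := (qNat_succ_pos hq1 hq2 j).ne'
    have n5 := (qFact_pos hq1 hq2 (j+1+r)).ne'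
    field_simp
    ring

/-- auxiliary product ∏_{i<k} (1 - q^{t-i}) -/
def Dp (q : ℝ) (t k : ℕ) : ℝ := ∏ i ∈ Finset.range k, (1 - q ^ (t - i))

lemma Dp_zero_of_lt {t k : ℕ} (h : t < k) : Dp q t k = 0 :=
  Finset.prod_eq_zero (Finset.mem_range.2 h) (by simp)

lemma Dp_succ (t k : ℕ) : Dp q t (k+1) = Dp q t k * (1 - q ^ (t - k)) :=
  Finset.prod_range_succ _ k

lemma pow_mul_Dp (k t : ℕ) : q^k * (q^(t-k) * Dp q t k) = q^t * Dp q t k := by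
  rcases le_or_gt k t with h | h
  · rw [← mul_assoc, ← pow_add, Nat.add_sub_cancel' h]
  · rw [Dp_zero_of_lt h]; ring

lemma fact_Dp (hq1 : -1 < q) (hq2 : q ≤ 1) :
    ∀ k t : ℕ, k ≤ t → (1 - q)^k * qFact q t = Dp q t k * qFact q (t - k) := by
  intro k
  induction k with
  | zero => intro t _; simp [Dp]
  | succ k ih =>
    intro t h
    obtain ⟨r, rfl⟩ : ∃ r, t = k + 1 + r := ⟨t - (k+1), by omega⟩
    have h1 : k + 1 + r - k = r + 1 := by omega
    have h2 : k + 1 + r - (k+1) = r := by omega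
    have ihk := ih (k+1+r) (by omega)
    rw [h1] at ihk
    have hFr : qFact q (r+1) = qFact q r * qNat q (r+1) := rfl
    rw [hFr] at ihk
    rw [h2, Dp, Finset.prod_range_succ, ← Dp, h1]
    have hgeom := one_sub_mul_qNat (q := q) (r+1)
    linear_combination (1 - q) * ihk + Dp q (k+1+r) k * qFact q r * hgeom

lemma key_identity (hq1 : -1 < q) (hq2 : q ≤ 1) (t : ℕ) :
    ∀ m : ℕ, ∑ k ∈ Finset.range (m+1),
      (-1:ℝ)^k * qBinom q m k * q^(k*(k-1)/2) * Dp q t k = q^(m*t) := by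
  intro m
  induction m with
  | zero => simp [qBinom_zero hq1 hq2, Dp]
  | succ m ih =>
    have hX0 : ((-1:ℝ))^0 * q^0 * qBinom q m 0 * q^(0*(0-1)/2) * Dp q t 0 = 1 := by
      simp [qBinom_zero hq1 hq2, Dp]
    have step : ∑ k ∈ Finset.range (m+1+1),
        (-1:ℝ)^k * qBinom q (m+1) k * q^(k*(k-1)/2) * Dp q t k
        = q^t * ∑ k ∈ Finset.range (m+1),
          (-1:ℝ)^k * qBinom q m k * q^(k*(k-1)/2) * Dp q t k := by
      rw [Finset.sum_range_succ' (fun k => (-1:ℝ)^k * qBinom q (m+1) k * q^(k*(k-1)/2) * Dp q t k) (m+1)]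
      have hsplit : ∀ j ∈ Finset.range (m+1),
          (-1:ℝ)^(j+1) * qBinom q (m+1) (j+1) * q^((j+1)*((j+1)-1)/2) * Dp q t (j+1)
          = ((-1:ℝ)^(j+1) * q^(j+1) * qBinom q m (j+1) * q^((j+1)*((j+1)-1)/2) * Dp q t (j+1))
            + ((-1:ℝ)^(j+1) * qBinom q m j * q^((j+1)*((j+1)-1)/2) * Dp q t (j+1)) := by
        intro j hj
        rw [qBinom_pascal hq1 hq2 (Finset.mem_range_succ_iff.mp hj)]
        ring
      rw [Finset.sum_congr rfl hsplit, Finset.sum_add_distrib]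
      -- first part: shift back
      have hshift : (-1:ℝ)^0 * qBinom q (m+1) 0 * q^(0*(0-1)/2) * Dp q t 0
          + (∑ j ∈ Finset.range (m+1),
          (-1:ℝ)^(j+1) * q^(j+1) * qBinom q m (j+1) * q^((j+1)*((j+1)-1)/2) * Dp q t (j+1))
          = ∑ k ∈ Finset.range (m+1), (-1:ℝ)^k * q^k * qBinom q m k * q^(k*(k-1)/2) * Dp q t k := by
        rw [show ((-1:ℝ))^0 * qBinom q (m+1) 0 * q^(0*(0-1)/2) * Dp q t 0
            = (-1:ℝ)^0 * q^0 * qBinom q m 0 * q^(0*(0-1)/2) * Dp q t 0 by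
          simp [qBinom_zero hq1 hq2, Dp]]
        rw [add_comm, ← Finset.sum_range_succ'
          (fun k => (-1:ℝ)^k * q^k * qBinom q m k * q^(k*(k-1)/2) * Dp q t k) (m+1)]
        rw [Finset.sum_range_succ]
        rw [show qBinom q m (m+1) = 0 by rw [qBinom, if_neg (by omega)]]
        ring
      rw [add_comm, ← add_assoc, hshift, ← Finset.sum_add_distrib, Finset.mul_sum]
      apply Finset.sum_congr rfl
      intro k hk
      -- X k + Q k = q^t * T k
      rw [Nat.triangle_succ k, Dp_succ]
      linear_combination ((-1:ℝ)^k * qBinom q m k * q^(k*(k-1)/2)) * pow_mul_Dp (q := q) k t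
    rw [step, ih, ← pow_add]
    congr 1
    ring

/-- the summand after shifting indices -/
def auxF (q ρ : ℝ) (ξ : ℕ → ℝ) (m n k t : ℕ) : ℝ :=
  (-1:ℝ)^k * qBinom q m k * q^(k*(k-1)/2) * (1-q)^k * ρ^k *
    (if k ≤ t then ρ^(t-k) / qFact q (t-k) * ξ (n+t) else 0)

/-- Proposition `pomoc`: for -1 < q ≤ 1, |ρ| < 1 and a sequence ξ with
σ_n(ρ'|q) = Σ_{j≥0} ρ'^j/[j]_q! · ξ_{n+j} absolutely convergent for all |ρ'| ≤ |ρ|,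
σ_n(ρ q^m|q) = Σ_{k=0}^m (-1)^k [m choose k]_q q^{k(k-1)/2} (1-q)^k ρ^k σ_{n+k}(ρ|q). -/
theorem statement1 (q ρ : ℝ) (hq1 : -1 < q) (hq2 : q ≤ 1) (hρ : |ρ| < 1) (ξ : ℕ → ℝ)
    (hconv : ∀ n : ℕ, ∀ ρ' : ℝ, |ρ'| ≤ |ρ| →
      Summable (fun j : ℕ => |ρ' ^ j / qFact q j * ξ (n + j)|))
    (m n : ℕ) :
    (∑' j : ℕ, (ρ * q ^ m) ^ j / qFact q j * ξ (n + j)) =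
      ∑ k ∈ Finset.range (m + 1),
        (-1 : ℝ) ^ k * qBinom q m k * q ^ (k * (k - 1) / 2) * (1 - q) ^ k * ρ ^ k *
          (∑' j : ℕ, ρ ^ j / qFact q j * ξ (n + k + j)) := by
  have hinj : ∀ k : ℕ, Function.Injective (fun j : ℕ => j + k) := fun k => add_left_injective k
  have hsupp : ∀ k : ℕ, ∀ x ∉ Set.range (fun j : ℕ => j + k), auxF q ρ ξ m n k x = 0 := by
    intro k x hx
    have hlt : ¬ k ≤ x := by
      intro h; exact hx ⟨x - k, by show x - k + k = x; omega⟩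
    simp [auxF, hlt]
  have hcomp : ∀ k j : ℕ, auxF q ρ ξ m n k (j + k)
      = (-1:ℝ)^k * qBinom q m k * q^(k*(k-1)/2) * (1-q)^k * ρ^k *
        (ρ^j / qFact q j * ξ (n+k+j)) := by
    intro k j
    have h1 : k ≤ j + k := by omega
    have h2 : j + k - k = j := by omega
    have h3 : n + (j + k) = n + k + j := by omega
    simp only [auxF, if_pos h1, h2, h3]
  have hsum : ∀ k ∈ Finset.range (m+1), Summable (fun t => auxF q ρ ξ m n k t) := by
    intro k _
    rw [← Function.Injective.summable_iff (hinj k) (hsupp k)]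
    have hs : Summable (fun j => ρ^j / qFact q j * ξ (n+k+j)) :=
      Summable.of_abs (hconv (n+k) ρ le_rfl)
    have := hs.mul_left ((-1:ℝ)^k * qBinom q m k * q^(k*(k-1)/2) * (1-q)^k * ρ^k)
    apply this.congr
    intro j
    exact (hcomp k j).symm
  have hterm : ∀ k ∈ Finset.range (m+1),
      (-1 : ℝ) ^ k * qBinom q m k * q ^ (k * (k - 1) / 2) * (1 - q) ^ k * ρ ^ k *
          (∑' j : ℕ, ρ ^ j / qFact q j * ξ (n + k + j))
        = ∑' t, auxF q ρ ξ m n k t := by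
    intro k _
    rw [← tsum_mul_left]
    rw [← Function.Injective.tsum_eq (hinj k)
      (Function.support_subset_iff'.2 (hsupp k))]
    exact tsum_congr fun j => (hcomp k j).symm
  rw [Finset.sum_congr rfl hterm, ← Summable.tsum_finsetSum hsum]
  apply tsum_congr
  intro t
  have hptwise : ∀ k ∈ Finset.range (m+1), auxF q ρ ξ m n k t
      = ((-1:ℝ)^k * qBinom q m k * q^(k*(k-1)/2) * Dp q t k) *
        (ρ^t / qFact q t * ξ (n+t)) := by
    intro k _
    unfold auxF
    rcases le_or_gt k t with h | h
    · rw [if_pos h]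
      have hfd := fact_Dp hq1 hq2 k t h
      have hρpow : ρ^k * ρ^(t-k) = ρ^t := by rw [← pow_add, Nat.add_sub_cancel' h]
      have h1 := (qFact_pos hq1 hq2 t).ne'
      have h2 := (qFact_pos hq1 hq2 (t-k)).ne'
      field_simp
      linear_combination (qBinom q m k * q^(k*(k-1)/2) * ξ (n+t) * ρ^t) * hfd
        + (qBinom q m k * q^(k*(k-1)/2) * ξ (n+t) * (1-q)^k * qFact q t) * hρpow
    · rw [if_neg (not_le.2 h), Dp_zero_of_lt h]
      ring
  rw [Finset.sum_congr rfl hptwise, ← Finset.sum_mul, key_identity hq1 hq2 t m]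
  rw [mul_pow, ← pow_mul]
  ring
end
end

section
/- For all -1 < q ≤ 1, all ρ with |ρ| < 1, all real x, y, and all integers i, j ≥ 0: Q_{i,j}(x,y|ρ,q) = Q_{j,i}(y,x|ρ,q). -/
open Finset MeasureTheory

noncomputable section

namespace Work
variable {q ρ x y : ℝ}

lemma qNat_zero : qNat q 0 = 0 := by simp [qNat]
lemma qNat_succ (n : ℕ) : qNat q (n + 1) = qNat q n + q ^ n := Finset.sum_range_succ _ _
lemma qNat_one : qNat q 1 = 1 := by simp [qNat]

lemma qNat_add (a b : ℕ) : qNat q (a + b) = qNat q a + q ^ a * qNat q b := by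
  induction b with
  | zero => simp [qNat_zero]
  | succ b ih =>
      rw [← Nat.add_assoc, qNat_succ, ih, qNat_succ, pow_add]
      ring

lemma qNat_pos (hq1 : -1 < q) (hq2 : q ≤ 1) {n : ℕ} (hn : n ≠ 0) : 0 < qNat q n := by
  rcases eq_or_lt_of_le hq2 with h1 | h1
  · have : qNat q n = n := by subst h1; simp [qNat]
    rw [this]
    exact_mod_cast Nat.pos_of_ne_zero hn
  · have hq : |q| < 1 := abs_lt.2 ⟨hq1, h1⟩
    have hqn : |q ^ n| < 1 := by
      rw [abs_pow]
      exact pow_lt_one₀ (abs_nonneg q) hq hn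
    have h2 : q ^ n < 1 := lt_of_le_of_lt (le_abs_self _) hqn
    have : qNat q n = (q ^ n - 1) / (q - 1) := by
      simpa [qNat] using geom_sum_eq (ne_of_lt h1) n
    rw [this]
    apply div_pos_of_neg_of_neg <;> linarith

lemma qFact_pos (hq1 : -1 < q) (hq2 : q ≤ 1) (n : ℕ) : 0 < qFact q n := by
  induction n with
  | zero => norm_num [qFact]
  | succ n ih => exact mul_pos ih (qNat_pos hq1 hq2 n.succ_ne_zero)

lemma qFact_ne_zero (hq1 : -1 < q) (hq2 : q ≤ 1) (n : ℕ) : qFact q n ≠ 0 :=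
  ne_of_gt (qFact_pos hq1 hq2 n)

lemma qNat_ne_zero (hq1 : -1 < q) (hq2 : q ≤ 1) {n : ℕ} (h : n ≠ 0) : qNat q n ≠ 0 :=
  ne_of_gt (qNat_pos hq1 hq2 h)

section
variable (hq1 : -1 < q) (hq2 : q ≤ 1)
include hq1 hq2

lemma qBinom_zero (n : ℕ) : qBinom q n 0 = 1 := by
  rw [qBinom, if_pos (Nat.zero_le n)]
  simp [qFact, div_self (qFact_ne_zero hq1 hq2 n)]

lemma qBinom_of_gt {n k : ℕ} (h : n < k) : qBinom q n k = 0 := by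
  rw [qBinom, if_neg (by omega)]

lemma qBinom_eq {n k : ℕ} (h : k ≤ n) :
    qBinom q n k = qFact q n / (qFact q (n - k) * qFact q k) := by
  rw [qBinom, if_pos h]

/-- Pascal A : [j+1, s+1] = [j, s+1] + q^(j-s) [j, s] -/
lemma qBinom_pascalA (j s : ℕ) :
    qBinom q (j + 1) (s + 1) = qBinom q j (s + 1) + q ^ (j - s) * qBinom q j s := by
  rcases lt_or_ge j s with h | h
  · rw [qBinom_of_gt hq1 hq2 (by omega), qBinom_of_gt hq1 hq2 (by omega),
        qBinom_of_gt hq1 hq2 (by omega)]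
    ring
  · rcases eq_or_lt_of_le h with h1 | h1
    · subst h1
      rw [qBinom_eq hq1 hq2 (le_refl (s+1)), qBinom_of_gt hq1 hq2 (Nat.lt_succ_self s),
          qBinom_eq hq1 hq2 (le_refl s)]
      have h0 : qFact q 0 = 1 := rfl
      rw [Nat.sub_self, Nat.sub_self, h0, one_mul, one_mul, pow_zero, one_mul,
          div_self (qFact_ne_zero hq1 hq2 (s+1)), div_self (qFact_ne_zero hq1 hq2 s)]
      norm_num
    · -- s < j
      have hs1 : s + 1 ≤ j := h1
      rw [qBinom_eq hq1 hq2 (by omega : s + 1 ≤ j + 1), qBinom_eq hq1 hq2 hs1,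
          qBinom_eq hq1 hq2 (le_of_lt h1)]
      have e1 : j + 1 - (s + 1) = j - s := by omega
      have e2 : j - s = (j - (s+1)) + 1 := by omega
      have e3 : qFact q (j - s) = qFact q (j - (s+1)) * qNat q (j - s) := by
        rw [e2]; rw [qFact]
      have e4 : qFact q (j + 1) = qFact q j * qNat q (j + 1) := rfl
      have e5 : qFact q (s + 1) = qFact q s * qNat q (s + 1) := rfl
      have key : qNat q (j + 1) = qNat q (j - s) + q ^ (j - s) * qNat q (s + 1) := by
        have e : j - s + (s + 1) = j + 1 := by omega
        rw [← e, qNat_add]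
      have n1 : qNat q (j - s) ≠ 0 := qNat_ne_zero hq1 hq2 (by omega)
      have n2 : qNat q (s + 1) ≠ 0 := qNat_ne_zero hq1 hq2 (by omega)
      have n3 : qFact q (j - (s+1)) ≠ 0 := qFact_ne_zero hq1 hq2 _
      have n4 : qFact q s ≠ 0 := qFact_ne_zero hq1 hq2 _
      rw [e1, e3, e4, e5]
      field_simp
      linear_combination (qFact q j) * key

/-- Pascal B : [j+1, s+1] = q^(s+1) [j, s+1] + [j, s] -/
lemma qBinom_pascalB (j s : ℕ) :
    qBinom q (j + 1) (s + 1) = q ^ (s + 1) * qBinom q j (s + 1) + qBinom q j s := by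
  rcases lt_or_ge j s with h | h
  · rw [qBinom_of_gt hq1 hq2 (by omega), qBinom_of_gt hq1 hq2 (by omega),
        qBinom_of_gt hq1 hq2 (by omega)]
    ring
  · rcases eq_or_lt_of_le h with h1 | h1
    · subst h1
      rw [qBinom_eq hq1 hq2 (le_refl (s+1)), qBinom_of_gt hq1 hq2 (Nat.lt_succ_self s),
          qBinom_eq hq1 hq2 (le_refl s)]
      have h0 : qFact q 0 = 1 := rfl
      rw [Nat.sub_self, Nat.sub_self, h0, one_mul, one_mul,
          div_self (qFact_ne_zero hq1 hq2 (s+1)), div_self (qFact_ne_zero hq1 hq2 s)]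
      norm_num
    · have hs1 : s + 1 ≤ j := h1
      rw [qBinom_eq hq1 hq2 (by omega : s + 1 ≤ j + 1), qBinom_eq hq1 hq2 hs1,
          qBinom_eq hq1 hq2 (le_of_lt h1)]
      have e1 : j + 1 - (s + 1) = j - s := by omega
      have e2 : j - s = j - (s+1) + 1 := by omega
      have e3 : qFact q (j - s) = qFact q (j - (s + 1)) * qNat q (j - s) := by
        rw [e2]; rw [qFact]
      have e4 : qFact q (j + 1) = qFact q j * qNat q (j + 1) := rfl
      have e5 : qFact q (s + 1) = qFact q s * qNat q (s + 1) := rfl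
      have key : qNat q (j + 1) = qNat q (s + 1) + q ^ (s + 1) * qNat q (j - s) := by
        have e : s + 1 + (j - s) = j + 1 := by omega
        rw [← e, qNat_add]
      have n1 : qNat q (j - s) ≠ 0 := qNat_ne_zero hq1 hq2 (by omega)
      have n2 : qNat q (s + 1) ≠ 0 := qNat_ne_zero hq1 hq2 (by omega)
      have n3 : qFact q (j - (s+1)) ≠ 0 := qFact_ne_zero hq1 hq2 _
      have n4 : qFact q s ≠ 0 := qFact_ne_zero hq1 hq2 _
      rw [e1, e3, e4, e5]
      field_simp
      linear_combination (qFact q j) * key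

/-- [j+1] * C(j,s) = C(j+1,s) * [j+1-s] -/
lemma qNat_mul_qBinom (j s : ℕ) :
    qNat q (j + 1) * qBinom q j s = qBinom q (j + 1) s * qNat q (j + 1 - s) := by
  rcases lt_or_ge j s with h | h
  · rcases eq_or_lt_of_le (Nat.succ_le_of_lt h) with h1 | h1
    · rw [← h1, qBinom_of_gt hq1 hq2 (by omega), qBinom_eq hq1 hq2 (le_refl (j+1)),
          Nat.sub_self, qNat_zero]
      ring
    · rw [qBinom_of_gt hq1 hq2 (by omega), qBinom_of_gt hq1 hq2 (by omega)]
      ring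
  · rw [qBinom_eq hq1 hq2 h, qBinom_eq hq1 hq2 (by omega)]
    have e2 : j + 1 - s = j - s + 1 := by omega
    have e3 : qFact q (j + 1 - s) = qFact q (j - s) * qNat q (j + 1 - s) := by
      rw [e2]; rw [qFact]
    have e4 : qFact q (j + 1) = qFact q j * qNat q (j + 1) := rfl
    have n1 : qNat q (j + 1 - s) ≠ 0 := qNat_ne_zero hq1 hq2 (by omega)
    have n3 : qFact q (j - s) ≠ 0 := qFact_ne_zero hq1 hq2 _
    have n4 : qFact q s ≠ 0 := qFact_ne_zero hq1 hq2 _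
    rw [e3, e4]
    field_simp

/-- C(j,s+1) * [s+1] = [j] * C(j-1,s) -/
lemma qBinom_mul_qNat (j s : ℕ) :
    qBinom q j (s + 1) * qNat q (s + 1) = qNat q j * qBinom q (j - 1) s := by
  rcases j with _ | m
  · rw [qBinom_of_gt hq1 hq2 (by omega), qNat_zero]
    ring
  · rcases lt_or_ge m s with h | h
    · rw [qBinom_of_gt hq1 hq2 (by omega)]
      have : m + 1 - 1 = m := rfl
      rw [this, qBinom_of_gt hq1 hq2 h]
      ring
    · rw [qBinom_eq hq1 hq2 (by omega : s + 1 ≤ m + 1)]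
      have : m + 1 - 1 = m := rfl
      rw [this, qBinom_eq hq1 hq2 h]
      have e1 : m + 1 - (s + 1) = m - s := by omega
      have e4 : qFact q (m + 1) = qFact q m * qNat q (m + 1) := rfl
      have e5 : qFact q (s + 1) = qFact q s * qNat q (s + 1) := rfl
      have n2 : qNat q (s + 1) ≠ 0 := qNat_ne_zero hq1 hq2 (by omega)
      have n3 : qFact q (m - s) ≠ 0 := qFact_ne_zero hq1 hq2 _
      have n4 : qFact q s ≠ 0 := qFact_ne_zero hq1 hq2 _
      have n5 : qFact q m ≠ 0 := qFact_ne_zero hq1 hq2 _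
      rw [e1, e4, e5]
      field_simp
end
lemma qHermite_succ (n : ℕ) :
    qHermite q (n + 1) x = x * qHermite q n x - qNat q n * qHermite q (n - 1) x := by
  rcases n with _ | m
  · simp [qHermite, qNat_zero]
  · rfl

lemma ascP_succ (n : ℕ) :
    ascP q y ρ (n + 1) x = (x - ρ * y * q ^ n) * ascP q y ρ n x -
      qNat q n * (1 - ρ ^ 2 * q ^ (n - 1)) * ascP q y ρ (n - 1) x := by
  rcases n with _ | m
  · simp [ascP, qNat_zero]
  · rfl

lemma qPoch_succ (a : ℝ) (n : ℕ) : qPoch a q (n + 1) = qPoch a q n * (1 - a * q ^ n) :=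
  Finset.prod_range_succ _ _

section
variable (hq1 : -1 < q) (hq2 : q ≤ 1) (hρ : |ρ| < 1)
include hq1 hq2 hρ

lemma one_sub_pos (n : ℕ) : 0 < 1 - ρ ^ 2 * q ^ n := by
  have h1 : |ρ ^ 2 * q ^ n| < 1 := by
    rw [abs_mul, abs_pow, abs_pow]
    have hq : |q| ≤ 1 := abs_le.2 ⟨le_of_lt hq1, hq2⟩
    calc |ρ| ^ 2 * |q| ^ n ≤ |ρ| ^ 2 * 1 := by
          apply mul_le_mul_of_nonneg_left (pow_le_one₀ (abs_nonneg q) hq) (by positivity)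
      _ = |ρ| ^ 2 := by ring
      _ < 1 := by
          have := abs_nonneg ρ
          nlinarith
  have := (abs_lt.1 h1).2
  linarith

lemma one_sub_ne (n : ℕ) : 1 - ρ ^ 2 * q ^ n ≠ 0 := ne_of_gt (one_sub_pos hq1 hq2 hρ n)

lemma qPoch_pos (n : ℕ) : 0 < qPoch (ρ ^ 2) q n :=
  Finset.prod_pos fun t _ => one_sub_pos hq1 hq2 hρ t

lemma qPoch_ne (n : ℕ) : qPoch (ρ ^ 2) q n ≠ 0 := ne_of_gt (qPoch_pos hq1 hq2 hρ n)

end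

/-- R m = P_m / (ρ²;q)_m -/
def Rr (q y ρ : ℝ) (m : ℕ) (x : ℝ) : ℝ := ascP q y ρ m x / qPoch (ρ ^ 2) q m

section
variable (hq1 : -1 < q) (hq2 : q ≤ 1) (hρ : |ρ| < 1)
include hq1 hq2 hρ

/-- the key ratio recurrence -/
lemma Rr_succ (m : ℕ) :
    Rr q y ρ (m + 1) x = x * Rr q y ρ m x - ρ * y * q ^ m * Rr q y ρ m x
      - qNat q m * Rr q y ρ (m - 1) x + ρ ^ 2 * q ^ m * Rr q y ρ (m + 1) x := by
  rcases m with _ | k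
  · have h1 : ascP q y ρ 1 x = x - ρ * y := rfl
    have h0 : ascP q y ρ 0 x = 1 := rfl
    simp only [Rr]; rw [qPoch_succ]
    rw [h1, h0, qNat_zero]
    have hP0 : qPoch (ρ ^ 2) q 0 = 1 := rfl
    rw [hP0]
    have hne : (1 : ℝ) - ρ ^ 2 ≠ 0 := by
      have := one_sub_ne hq1 hq2 hρ 0
      simpa using this
    simp only [pow_zero, mul_one, one_mul, div_one, qNat_zero, zero_mul, sub_zero]
    field_simp
    ring
  · have hrec := ascP_succ (q := q) (x := x) (y := y) (ρ := ρ) (k + 1)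
    have e1 : k + 1 - 1 = k := rfl
    rw [e1] at hrec
    have d2 : qPoch (ρ ^ 2) q (k + 2) = qPoch (ρ ^ 2) q (k + 1) * (1 - ρ ^ 2 * q ^ (k+1)) :=
      qPoch_succ _ _
    have d1 : qPoch (ρ ^ 2) q (k + 1) = qPoch (ρ ^ 2) q k * (1 - ρ ^ 2 * q ^ k) :=
      qPoch_succ _ _
    simp only [Rr]; rw [e1, hrec, d2, d1]
    have n0 : qPoch (ρ ^ 2) q k ≠ 0 := qPoch_ne hq1 hq2 hρ k
    have n1 : (1:ℝ) - ρ ^ 2 * q ^ k ≠ 0 := one_sub_ne hq1 hq2 hρ k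
    have n2 : (1:ℝ) - ρ ^ 2 * q ^ (k+1) ≠ 0 := one_sub_ne hq1 hq2 hρ (k+1)
    field_simp
    ring
end
/-- weighted Q-sum -/
def QW (q ρ : ℝ) (i j : ℕ) (x y : ℝ) (w : ℕ → ℝ) : ℝ :=
  ∑ s ∈ Finset.range (j + 1),
    (-1 : ℝ) ^ s * q ^ (s * (s - 1) / 2) * w s * qBinom q j s * ρ ^ s *
      qHermite q (j - s) y * Rr q y ρ (i + s) x

lemma Qpoly_eq (i j : ℕ) : Qpoly q ρ i j x y = QW q ρ i j x y (fun _ => 1) := by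
  unfold Qpoly QW
  refine Finset.sum_congr rfl fun s _ => ?_
  simp only [Rr]
  ring

/-- Q̃ : the q^s-weighted sum -/
def Qt (q ρ : ℝ) (i j : ℕ) (x y : ℝ) : ℝ := QW q ρ i j x y (fun s => q ^ s)

lemma tri_succ (s : ℕ) : (s + 1) * s / 2 = s * (s - 1) / 2 + s := by
  rcases s with _ | t
  · rfl
  · have : (t + 1 + 1) * (t + 1) = (t + 1) * (t + 1 - 1) + 2 * (t + 1) := by
      simp only [Nat.add_sub_cancel]
      ring
    omega

lemma pow_tri_succ (s : ℕ) :
    q ^ ((s + 1) * (s + 1 - 1) / 2) = q ^ (s * (s - 1) / 2) * q ^ s := by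
  rw [Nat.add_sub_cancel, ← pow_add, tri_succ]

section
variable (hq1 : -1 < q) (hq2 : q ≤ 1)
include hq1 hq2

/-- padding : QW over range (m+2) -/
lemma QW_pad (w : ℕ → ℝ) (i m : ℕ) :
    QW q ρ i m x y w =
      ∑ s ∈ Finset.range (m + 2),
        (-1 : ℝ) ^ s * q ^ (s * (s - 1) / 2) * w s * qBinom q m s * ρ ^ s *
          qHermite q (m - s) y * Rr q y ρ (i + s) x := by
  rw [QW, Finset.sum_range_succ (n := m + 1), qBinom_of_gt hq1 hq2 (Nat.lt_succ_self m)]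
  simp [mul_zero, zero_mul, add_zero]

/-- y·QW_{i,j} − [j]·QW_{i,j-1} raises the Hermite index -/
lemma combine (w : ℕ → ℝ) (i j : ℕ) :
    y * QW q ρ i j x y w - qNat q j * QW q ρ i (j - 1) x y w =
      ∑ s ∈ Finset.range (j + 1),
        (-1 : ℝ) ^ s * q ^ (s * (s - 1) / 2) * w s * qBinom q j s * ρ ^ s *
          qHermite q (j + 1 - s) y * Rr q y ρ (i + s) x := by
  rcases j with _ | m
  · simp only [qNat_zero, zero_mul, sub_zero, QW, Finset.sum_range_one, Finset.mul_sum]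
    norm_num
    rw [show qHermite q 0 y = 1 from rfl, show qHermite q 1 y = y from rfl]
    ring
  · simp only [Nat.add_sub_cancel]
    rw [QW_pad hq1 hq2 w i m, QW, Finset.mul_sum, Finset.mul_sum, ← Finset.sum_sub_distrib]
    refine Finset.sum_congr rfl fun s hs => ?_
    have hsm : s ≤ m + 1 := by
      have := Finset.mem_range.1 hs; omega
    have e1 : m + 1 + 1 - s = (m + 1 - s) + 1 := by omega
    have e2 : (m + 1 - s) - 1 = m - s := by omega
    rw [e1, qHermite_succ (m + 1 - s), e2]
    linear_combination (-((-1 : ℝ) ^ s) * q ^ (s * (s - 1) / 2) * w s * ρ ^ s *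
      qHermite q (m - s) y * Rr q y ρ (i + s) x) * qNat_mul_qBinom hq1 hq2 m s

end
section
variable (hq1 : -1 < q) (hq2 : q ≤ 1)
include hq1 hq2

/-- T2 : the j-raising identity -/
lemma T2 (i j : ℕ) :
    Qpoly q ρ i (j + 1) x y = y * Qpoly q ρ i j x y - qNat q j * Qpoly q ρ i (j - 1) x y
      - ρ * q ^ j * Qpoly q ρ (i + 1) j x y := by
  rw [Qpoly_eq, Qpoly_eq, Qpoly_eq, Qpoly_eq, combine hq1 hq2 (fun _ => 1) i j]
  have key : QW q ρ i (j + 1) x y (fun _ => 1) -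
      (∑ s ∈ Finset.range (j + 1),
        (-1 : ℝ) ^ s * q ^ (s * (s - 1) / 2) * (fun _ => (1:ℝ)) s * qBinom q j s * ρ ^ s *
          qHermite q (j + 1 - s) y * Rr q y ρ (i + s) x) =
      -(ρ * q ^ j * QW q ρ (i + 1) j x y (fun _ => 1)) := by
    have pad : (∑ s ∈ Finset.range (j + 1),
        (-1 : ℝ) ^ s * q ^ (s * (s - 1) / 2) * (fun _ => (1:ℝ)) s * qBinom q j s * ρ ^ s *
          qHermite q (j + 1 - s) y * Rr q y ρ (i + s) x) =
        ∑ s ∈ Finset.range (j + 2),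
        (-1 : ℝ) ^ s * q ^ (s * (s - 1) / 2) * qBinom q j s * ρ ^ s *
          qHermite q (j + 1 - s) y * Rr q y ρ (i + s) x := by
      rw [Finset.sum_range_succ (n := j + 1), qBinom_of_gt hq1 hq2 (Nat.lt_succ_self j)]
      simp [mul_zero, zero_mul, add_zero]
    rw [pad, QW, ← Finset.sum_sub_distrib, QW, Finset.mul_sum, ← Finset.sum_neg_distrib,
        Finset.sum_range_succ']
    have f0 : (-1 : ℝ) ^ 0 * q ^ (0 * (0 - 1) / 2) * (fun _ => (1:ℝ)) 0 * qBinom q (j+1) 0 * ρ ^ 0 *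
          qHermite q (j + 1 - 0) y * Rr q y ρ (i + 0) x -
        (-1 : ℝ) ^ 0 * q ^ (0 * (0 - 1) / 2) * qBinom q j 0 * ρ ^ 0 *
          qHermite q (j + 1 - 0) y * Rr q y ρ (i + 0) x = 0 := by
      rw [qBinom_zero hq1 hq2, qBinom_zero hq1 hq2]
      ring
    rw [f0, add_zero]
    refine Finset.sum_congr rfl fun s hs => ?_
    have hs' : s ≤ j := by have := Finset.mem_range.1 hs; omega
    have ee : q ^ s * q ^ (j - s) = q ^ j := by
      rw [← pow_add]; congr 1; omega
    have hp2 : q ^ s * qBinom q (j+1) (s+1) - q ^ s * qBinom q j (s+1) =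
        q ^ j * qBinom q j s := by
      rw [← ee]
      linear_combination (q ^ s) * qBinom_pascalA hq1 hq2 j s
    rw [show j + 1 - (s + 1) = j - s from by omega, show i + (s + 1) = i + 1 + s from by omega,
        pow_tri_succ]
    linear_combination ((-1 : ℝ) ^ (s+1) * q ^ (s * (s - 1) / 2) * ρ ^ (s+1) *
      qHermite q (j - s) y * Rr q y ρ (i + 1 + s) x) * hp2
  linarith [key]

/-- T1aux : the Q̃ version of the raising identity -/
lemma T1aux (i j : ℕ) :
    Qpoly q ρ i (j + 1) x y = y * Qt q ρ i j x y - qNat q j * Qt q ρ i (j - 1) x y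
      - ρ * Qt q ρ (i + 1) j x y := by
  rw [Qpoly_eq, Qt, Qt, Qt, combine hq1 hq2 (fun s => q ^ s) i j]
  have key : QW q ρ i (j + 1) x y (fun _ => 1) -
      (∑ s ∈ Finset.range (j + 1),
        (-1 : ℝ) ^ s * q ^ (s * (s - 1) / 2) * (fun s => q ^ s) s * qBinom q j s * ρ ^ s *
          qHermite q (j + 1 - s) y * Rr q y ρ (i + s) x) =
      -(ρ * QW q ρ (i + 1) j x y (fun s => q ^ s)) := by
    have pad : (∑ s ∈ Finset.range (j + 1),
        (-1 : ℝ) ^ s * q ^ (s * (s - 1) / 2) * (fun s => q ^ s) s * qBinom q j s * ρ ^ s *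
          qHermite q (j + 1 - s) y * Rr q y ρ (i + s) x) =
        ∑ s ∈ Finset.range (j + 2),
        (-1 : ℝ) ^ s * q ^ (s * (s - 1) / 2) * q ^ s * qBinom q j s * ρ ^ s *
          qHermite q (j + 1 - s) y * Rr q y ρ (i + s) x := by
      rw [Finset.sum_range_succ (n := j + 1), qBinom_of_gt hq1 hq2 (Nat.lt_succ_self j)]
      simp [mul_zero, zero_mul, add_zero]
    rw [pad, QW, ← Finset.sum_sub_distrib, QW, Finset.mul_sum, ← Finset.sum_neg_distrib,
        Finset.sum_range_succ']
    have f0 : (-1 : ℝ) ^ 0 * q ^ (0 * (0 - 1) / 2) * (fun _ => (1:ℝ)) 0 * qBinom q (j+1) 0 * ρ ^ 0 *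
          qHermite q (j + 1 - 0) y * Rr q y ρ (i + 0) x -
        (-1 : ℝ) ^ 0 * q ^ (0 * (0 - 1) / 2) * q ^ 0 * qBinom q j 0 * ρ ^ 0 *
          qHermite q (j + 1 - 0) y * Rr q y ρ (i + 0) x = 0 := by
      rw [qBinom_zero hq1 hq2, qBinom_zero hq1 hq2]
      ring
    rw [f0, add_zero]
    refine Finset.sum_congr rfl fun s hs => ?_
    have hs' : s ≤ j := by have := Finset.mem_range.1 hs; omega
    have hp2 : qBinom q (j+1) (s+1) - q ^ (s+1) * qBinom q j (s+1) = qBinom q j s := by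
      linear_combination qBinom_pascalB hq1 hq2 j s
    rw [show j + 1 - (s + 1) = j - s from by omega, show i + (s + 1) = i + 1 + s from by omega,
        pow_tri_succ]
    linear_combination ((-1 : ℝ) ^ (s+1) * q ^ (s * (s - 1) / 2) * q ^ s * ρ ^ (s+1) *
      qHermite q (j - s) y * Rr q y ρ (i + 1 + s) x) * hp2
  linarith [key]
end

section
variable (hq1 : -1 < q) (hq2 : q ≤ 1)
include hq1 hq2

/-- the middle sum lemma -/
lemma midM (i j : ℕ) :
    (∑ s ∈ Finset.range (j + 1),
      (-1 : ℝ) ^ s * q ^ (s * (s - 1) / 2) * qBinom q j s * ρ ^ s * qNat q s *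
        qHermite q (j - s) y * Rr q y ρ (i + s - 1) x) =
      -(ρ * qNat q j * Qt q ρ i (j - 1) x y) := by
  rw [Finset.sum_range_succ']
  have f0 : (-1 : ℝ) ^ 0 * q ^ (0 * (0 - 1) / 2) * qBinom q j 0 * ρ ^ 0 * qNat q 0 *
      qHermite q (j - 0) y * Rr q y ρ (i + 0 - 1) x = 0 := by
    rw [qNat_zero]; ring
  rw [f0, add_zero]
  rcases j with _ | m
  · simp [qNat_zero]
  · rw [Qt, QW, show (m + 1 - 1) = m from rfl, Finset.mul_sum, ← Finset.sum_neg_distrib]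
    refine Finset.sum_congr rfl fun s hs => ?_
    have hb : qBinom q (m+1) (s + 1) * qNat q (s + 1) = qNat q (m+1) * qBinom q m s := by
      have := qBinom_mul_qNat hq1 hq2 (m+1) s
      simpa using this
    rw [show m + 1 - (s + 1) = m - s from by omega, show i + (s + 1) - 1 = i + s from by omega,
        pow_tri_succ]
    linear_combination ((-1 : ℝ) ^ (s+1) * q ^ (s * (s - 1) / 2) * q ^ s * ρ ^ (s+1) *
      qHermite q (m - s) y * Rr q y ρ (i + s) x) * hb

/-- expansion of Q_{i+1,j} via the ratio recurrence -/
lemma expandQ (hρ : |ρ| < 1) (i j : ℕ) :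
    QW q ρ (i + 1) j x y (fun _ => 1) =
      x * QW q ρ i j x y (fun _ => 1) - ρ * y * q ^ i * Qt q ρ i j x y -
      (∑ s ∈ Finset.range (j + 1),
        (-1 : ℝ) ^ s * q ^ (s * (s - 1) / 2) * qBinom q j s * ρ ^ s * qNat q (i + s) *
          qHermite q (j - s) y * Rr q y ρ (i + s - 1) x) +
      ρ ^ 2 * q ^ i * Qt q ρ (i + 1) j x y := by
  rw [QW, QW, Qt, QW, Qt, QW, Finset.mul_sum, Finset.mul_sum, Finset.mul_sum,
      ← Finset.sum_sub_distrib, ← Finset.sum_sub_distrib, ← Finset.sum_add_distrib]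
  refine Finset.sum_congr rfl fun s hs => ?_
  rw [show i + 1 + s = i + s + 1 from by omega]
  linear_combination ((-1 : ℝ) ^ s * q ^ (s * (s - 1) / 2) * qBinom q j s * ρ ^ s *
    qHermite q (j - s) y) * Rr_succ hq1 hq2 hρ (m := i + s) (x := x) (y := y)

/-- T1 : the i-raising identity -/
lemma T1 (hρ : |ρ| < 1) (i j : ℕ) :
    Qpoly q ρ (i + 1) j x y = x * Qpoly q ρ i j x y - qNat q i * Qpoly q ρ (i - 1) j x y
      - ρ * q ^ i * Qpoly q ρ i (j + 1) x y := by
  have a := T1aux hq1 hq2 (ρ := ρ) (x := x) (y := y) i j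
  have e := expandQ hq1 hq2 hρ (x := x) (y := y) i j
  have m : (∑ s ∈ Finset.range (j + 1),
      (-1 : ℝ) ^ s * q ^ (s * (s - 1) / 2) * qBinom q j s * ρ ^ s * qNat q (i + s) *
        qHermite q (j - s) y * Rr q y ρ (i + s - 1) x) =
      qNat q i * QW q ρ (i - 1) j x y (fun _ => 1) -
        q ^ i * (ρ * qNat q j * Qt q ρ i (j - 1) x y) := by
    rcases i with _ | k
    · have h0 := midM hq1 hq2 (ρ := ρ) (x := x) (y := y) 0 j
      simp only [Nat.zero_add] at h0 ⊢
      rw [h0, qNat_zero, pow_zero]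
      ring
    · have split : (∑ s ∈ Finset.range (j + 1),
          (-1 : ℝ) ^ s * q ^ (s * (s - 1) / 2) * qBinom q j s * ρ ^ s * qNat q (k + 1 + s) *
            qHermite q (j - s) y * Rr q y ρ (k + 1 + s - 1) x) =
          (∑ s ∈ Finset.range (j + 1),
            qNat q (k+1) * ((-1 : ℝ) ^ s * q ^ (s * (s - 1) / 2) * qBinom q j s * ρ ^ s *
              qHermite q (j - s) y * Rr q y ρ (k + s) x)) +
          q ^ (k+1) * (∑ s ∈ Finset.range (j + 1),
            (-1 : ℝ) ^ s * q ^ (s * (s - 1) / 2) * qBinom q j s * ρ ^ s * qNat q s *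
              qHermite q (j - s) y * Rr q y ρ (k + 1 + s - 1) x) := by
        rw [Finset.mul_sum, ← Finset.sum_add_distrib]
        refine Finset.sum_congr rfl fun s hs => ?_
        rw [qNat_add (a := k+1) (b := s), show k + 1 + s - 1 = k + s from by omega]
        ring
      rw [split, midM hq1 hq2 (ρ := ρ) (x := x) (y := y) (k+1) j, QW,
          show (k + 1 - 1) = k from rfl, Finset.mul_sum]
      have hs2 : (∑ s ∈ Finset.range (j + 1),
          qNat q (k+1) * ((-1 : ℝ) ^ s * q ^ (s * (s - 1) / 2) * qBinom q j s * ρ ^ s *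
            qHermite q (j - s) y * Rr q y ρ (k + s) x)) =
          ∑ s ∈ Finset.range (j + 1),
            qNat q (k+1) * ((-1 : ℝ) ^ s * q ^ (s * (s - 1) / 2) * (fun _ => (1:ℝ)) s *
              qBinom q j s * ρ ^ s * qHermite q (j - s) y * Rr q y ρ (k + s) x) :=
        Finset.sum_congr rfl fun s _ => by ring
      rw [hs2]
      ring
  rw [Qpoly_eq (i+1) j, Qpoly_eq i j, Qpoly_eq (i-1) j]
  linear_combination e - m + (ρ * q ^ i) * a
end

section
variable (hq1 : -1 < q) (hq2 : q ≤ 1) (hρ : |ρ| < 1)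
include hq1 hq2 hρ

lemma R2 (i j : ℕ) :
    (1 - ρ ^ 2 * q ^ (i + j)) * Qpoly q ρ (i + 1) j x y =
      (x - ρ * q ^ i * y) * Qpoly q ρ i j x y - qNat q i * Qpoly q ρ (i - 1) j x y
        + ρ * q ^ i * qNat q j * Qpoly q ρ i (j - 1) x y := by
  have t1 := T1 hq1 hq2 hρ (ρ := ρ) (x := x) (y := y) i j
  have t2 := T2 hq1 hq2 (ρ := ρ) (x := x) (y := y) i j
  linear_combination t1 - (ρ * q ^ i) * t2

lemma R1 (i j : ℕ) :
    (1 - ρ ^ 2 * q ^ (i + j)) * Qpoly q ρ i (j + 1) x y =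
      (y - ρ * q ^ j * x) * Qpoly q ρ i j x y - qNat q j * Qpoly q ρ i (j - 1) x y
        + ρ * q ^ j * qNat q i * Qpoly q ρ (i - 1) j x y := by
  have t1 := T1 hq1 hq2 hρ (ρ := ρ) (x := x) (y := y) i j
  have t2 := T2 hq1 hq2 (ρ := ρ) (x := x) (y := y) i j
  linear_combination t2 - (ρ * q ^ j) * t1

lemma Q00 (u v : ℝ) : Qpoly q ρ 0 0 u v = 1 := by
  rw [Qpoly, Finset.sum_range_one]
  have h0 : qHermite q 0 v = 1 := rfl
  have h1 : ascP q v ρ 0 u = 1 := rfl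
  have h2 : qPoch (ρ ^ 2) q 0 = 1 := rfl
  norm_num [h0, h1, h2]
  exact qBinom_zero hq1 hq2 0

lemma sym : ∀ n i j : ℕ, i + j ≤ n → Qpoly q ρ i j x y = Qpoly q ρ j i y x := by
  intro n
  induction n with
  | zero =>
      intro i j h
      have hi : i = 0 := by omega
      have hj : j = 0 := by omega
      subst hi; subst hj
      rw [Q00 hq1 hq2 hρ, Q00 hq1 hq2 hρ]
  | succ n IH =>
      intro i j h
      rcases j with _ | m
      · rcases i with _ | k
        · rw [Q00 hq1 hq2 hρ, Q00 hq1 hq2 hρ]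
        · have h1 := R2 hq1 hq2 hρ (ρ := ρ) (x := x) (y := y) k 0
          have h2 := R1 hq1 hq2 hρ (ρ := ρ) (x := y) (y := x) 0 k
          have e1 : Qpoly q ρ k 0 x y = Qpoly q ρ 0 k y x := IH k 0 (by omega)
          have e2 : qNat q k * Qpoly q ρ (k - 1) 0 x y =
              qNat q k * Qpoly q ρ 0 (k - 1) y x := by
            rcases k with _ | k'
            · rw [qNat_zero]; ring
            · rw [IH (k' + 1 - 1) 0 (by omega)]
          have hne : (1 : ℝ) - ρ ^ 2 * q ^ (k + 0) ≠ 0 := one_sub_ne hq1 hq2 hρ (k + 0)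
          apply mul_left_cancel₀ hne
          rw [h1]
          have e0 : (1 : ℝ) - ρ ^ 2 * q ^ (0 + k) = 1 - ρ ^ 2 * q ^ (k + 0) := by
            rw [Nat.add_comm]
          rw [← e0, h2]
          rw [qNat_zero]
          linear_combination (x - ρ * q ^ k * y) * e1 - e2
      · have h1 := R1 hq1 hq2 hρ (ρ := ρ) (x := x) (y := y) i m
        have h2 := R2 hq1 hq2 hρ (ρ := ρ) (x := y) (y := x) m i
        have e1 : Qpoly q ρ i m x y = Qpoly q ρ m i y x := IH i m (by omega)
        have e2 : qNat q m * Qpoly q ρ i (m - 1) x y =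
            qNat q m * Qpoly q ρ (m - 1) i y x := by
          rcases m with _ | m'
          · rw [qNat_zero]; ring
          · rw [IH i (m' + 1 - 1) (by omega)]
        have e3 : qNat q i * Qpoly q ρ (i - 1) m x y =
            qNat q i * Qpoly q ρ m (i - 1) y x := by
          rcases i with _ | i'
          · rw [qNat_zero]; ring
          · rw [IH (i' + 1 - 1) m (by omega)]
        have hne : (1 : ℝ) - ρ ^ 2 * q ^ (i + m) ≠ 0 := one_sub_ne hq1 hq2 hρ (i + m)
        apply mul_left_cancel₀ hne
        rw [h1]
        have e0 : (1 : ℝ) - ρ ^ 2 * q ^ (m + i) = 1 - ρ ^ 2 * q ^ (i + m) := by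
          rw [Nat.add_comm]
        rw [← e0, h2]
        linear_combination (y - ρ * q ^ m * x) * e1 - e2 + (ρ * q ^ m) * e3
end

end Work

/-- Q_{i,j}(x,y|ρ,q) = Q_{j,i}(y,x|ρ,q). -/
theorem statement5 (q ρ : ℝ) (hq1 : -1 < q) (hq2 : q ≤ 1) (hρ : |ρ| < 1)
    (x y : ℝ) (i j : ℕ) :
    Qpoly q ρ i j x y = Qpoly q ρ j i y x :=
  Work.sym hq1 hq2 hρ (i + j) i j le_rfl
end
end
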